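/- Let μ₁, μ₂ be probability measures on a measurable space X, μ a coupling of μ₁ and μ₂ with disintegrations μ(dx dy) = k₁(x, dy) μ₁(dx) = k₂(y, dx) μ₂(dy), and μ₀ a measure with μ₀ ≤ μ₁ and μ₀ ≤ μ₂. Then the signed measure ν(dx dy) := μ(dx dy) + (1/2)δ_x(dy)μ₀(dx) + (1/2)∫_X k₂(z,dx)k₁(z,dy)μ₀(dz) − (1/2)k₁(x,dy)μ₀(dx) − (1/2)k₂(y,dx)μ₀(dy) is a coupling of μ₁ and μ₂ whenever it is nonnegative: its first marginal is μ₁ and its second marginal is μ₂. -/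

import Mathlib

open MeasureTheory ProbabilityTheory

/-- Given a coupling `μ` of `μ₁, μ₂` with disintegrations `μ = μ₁ ⊗ k₁ = swap_*(μ₂ ⊗ k₂)`
and a measure `μ₀ ≤ μ₁, μ₂`, the (signed) modification
`ν = μ + ½ δ_x(dy)μ₀(dx) + ½ ∫ k₂(z,dx)k₁(z,dy)μ₀(dz) − ½ k₁(x,dy)μ₀(dx) − ½ k₂(y,dx)μ₀(dy)`
is again a coupling of `μ₁` and `μ₂` whenever it is a (nonnegative) measure; here the
nonnegativity is expressed by giving `ν` as a measure satisfying the defining equation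
with the negative parts moved to the left-hand side. -/
theorem stmt_19 {X : Type*} [MeasurableSpace X]
    (μ₁ μ₂ : Measure X) [IsProbabilityMeasure μ₁] [IsProbabilityMeasure μ₂]
    (μ : Measure (X × X)) [IsProbabilityMeasure μ]
    (hμ₁ : μ.map Prod.fst = μ₁) (hμ₂ : μ.map Prod.snd = μ₂)
    (k₁ k₂ : ProbabilityTheory.Kernel X X) [IsMarkovKernel k₁] [IsMarkovKernel k₂]
    (hk₁ : μ = μ₁.compProd k₁)
    (hk₂ : μ = (μ₂.compProd k₂).map Prod.swap)
    (μ₀ : Measure X) (hμ₀₁ : μ₀ ≤ μ₁) (hμ₀₂ : μ₀ ≤ μ₂)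
    (ν : Measure (X × X))
    (hν : ν + (2 : ENNReal)⁻¹ • (μ₀.compProd k₁)
            + (2 : ENNReal)⁻¹ • ((μ₀.compProd k₂).map Prod.swap)
        = μ + (2 : ENNReal)⁻¹ • (μ₀.map (fun x => (x, x)))
            + (2 : ENNReal)⁻¹ • (μ₀.bind (fun z => (k₂ z).prod (k₁ z)))) :
    ν.map Prod.fst = μ₁ ∧ ν.map Prod.snd = μ₂ := by
  have hfin : IsFiniteMeasure μ₀ :=
    ⟨lt_of_le_of_lt (hμ₀₁ Set.univ) (measure_lt_top μ₁ _)⟩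
  have hbind : (fun z => (k₂ z).prod (k₁ z)) = ⇑(k₂ ×ₖ k₁) := by
    ext z : 1
    exact (Kernel.prod_apply k₂ k₁ z).symm
  have hμ₀fin : ∀ s : Set X, μ₀ s ≠ ⊤ := fun s => measure_ne_top μ₀ s
  have key : ∀ A : Set (X × X), MeasurableSet A →
      ν A + 2⁻¹ * (μ₀.compProd k₁) A + 2⁻¹ * ((μ₀.compProd k₂).map Prod.swap) A
        = μ A + 2⁻¹ * (μ₀.map (fun x => (x, x))) A
            + 2⁻¹ * (μ₀.bind (fun z => (k₂ z).prod (k₁ z))) A := by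
    intro A hA
    have := congrArg (fun m : Measure (X × X) => m A) hν
    simpa [Measure.add_apply, Measure.smul_apply, smul_eq_mul] using this
  have hIfin : ∀ (k : Kernel X X) (_ : IsMarkovKernel k) (s : Set X),
      ∫⁻ z, k z s ∂μ₀ ≠ ⊤ := by
    intro k hk s
    refine ne_top_of_le_ne_top (hμ₀fin Set.univ) ?_
    calc ∫⁻ z, k z s ∂μ₀ ≤ ∫⁻ _, 1 ∂μ₀ := lintegral_mono fun z => prob_le_one
      _ = μ₀ Set.univ := by simp
  have h2 : (2 : ENNReal)⁻¹ ≠ ⊤ := by simp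
  constructor
  · ext s hs
    rw [Measure.map_apply measurable_fst hs]
    have h := key (Prod.fst ⁻¹' s) (measurable_fst hs)
    have e1 : (μ₀.compProd k₁) (Prod.fst ⁻¹' s) = μ₀ s := by
      rw [show (μ₀.compProd k₁) (Prod.fst ⁻¹' s) = (μ₀.compProd k₁).fst s from
        (Measure.fst_apply hs).symm, Measure.fst_compProd]
    have e2 : ((μ₀.compProd k₂).map Prod.swap) (Prod.fst ⁻¹' s)
        = ∫⁻ z, k₂ z s ∂μ₀ := by
      rw [Measure.map_apply measurable_swap (measurable_fst hs),
        show Prod.swap ⁻¹' (Prod.fst ⁻¹' s) = Prod.snd ⁻¹' s from rfl,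
        Measure.compProd_apply (measurable_snd hs)]
      rfl
    have e3 : μ (Prod.fst ⁻¹' s) = μ₁ s := by
      rw [← hμ₁, Measure.map_apply measurable_fst hs]
    have e4 : (μ₀.map (fun x => (x, x))) (Prod.fst ⁻¹' s) = μ₀ s := by
      rw [Measure.map_apply (measurable_id.prod measurable_id) (measurable_fst hs)]
      rfl
    have e5 : (μ₀.bind (fun z => (k₂ z).prod (k₁ z))) (Prod.fst ⁻¹' s)
        = ∫⁻ z, k₂ z s ∂μ₀ := by
      rw [hbind, Measure.bind_apply (measurable_fst hs) (Kernel.measurable _).aemeasurable]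
      congr 1
      ext z
      rw [Kernel.prod_apply, ← Set.prod_univ, Measure.prod_prod]
      simp
    rw [e1, e2, e3, e4, e5] at h
    exact WithTop.add_right_cancel (ENNReal.mul_ne_top h2 (hμ₀fin s))
      (WithTop.add_right_cancel (ENNReal.mul_ne_top h2 (hIfin k₂ inferInstance s)) h)
  · ext s hs
    rw [Measure.map_apply measurable_snd hs]
    have h := key (Prod.snd ⁻¹' s) (measurable_snd hs)
    have e1 : (μ₀.compProd k₁) (Prod.snd ⁻¹' s) = ∫⁻ z, k₁ z s ∂μ₀ := by
      rw [Measure.compProd_apply (measurable_snd hs)]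
      rfl
    have e2 : ((μ₀.compProd k₂).map Prod.swap) (Prod.snd ⁻¹' s) = μ₀ s := by
      rw [Measure.map_apply measurable_swap (measurable_snd hs),
        show Prod.swap ⁻¹' (Prod.snd ⁻¹' s) = Prod.fst ⁻¹' s from rfl,
        show (μ₀.compProd k₂) (Prod.fst ⁻¹' s) = (μ₀.compProd k₂).fst s from
          (Measure.fst_apply hs).symm, Measure.fst_compProd]
    have e3 : μ (Prod.snd ⁻¹' s) = μ₂ s := by
      rw [← hμ₂, Measure.map_apply measurable_snd hs]
    have e4 : (μ₀.map (fun x => (x, x))) (Prod.snd ⁻¹' s) = μ₀ s := by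
      rw [Measure.map_apply (measurable_id.prod measurable_id) (measurable_snd hs)]
      rfl
    have e5 : (μ₀.bind (fun z => (k₂ z).prod (k₁ z))) (Prod.snd ⁻¹' s)
        = ∫⁻ z, k₁ z s ∂μ₀ := by
      rw [hbind, Measure.bind_apply (measurable_snd hs) (Kernel.measurable _).aemeasurable]
      congr 1
      ext z
      rw [Kernel.prod_apply, ← Set.univ_prod, Measure.prod_prod]
      simp
    rw [e1, e2, e3, e4, e5] at h
    -- h : ν A + 2⁻¹ * ∫k₁ + 2⁻¹ * μ₀ s = μ₂ s + 2⁻¹ * μ₀ s + 2⁻¹ * ∫k₁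
    rw [add_right_comm (μ₂ s)] at h
    exact WithTop.add_right_cancel (ENNReal.mul_ne_top h2 (hIfin k₁ inferInstance s))
      (WithTop.add_right_cancel (ENNReal.mul_ne_top h2 (hμ₀fin s)) h)
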